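/- Let H be a complex Hilbert space, let T : H →L[ℂ] H be a bounded self-adjoint operator that is positive (⟪T f, f⟫ ≥ 0 for all f) and injective, and let S : H →L[ℂ] H be a bounded operator such that |⟪S u, v⟫| ≤ M · ‖T^{1/2} u‖ · ‖T^{1/2} v‖ for all u, v ∈ H, where M ≥ 0. Then there exists a bounded operator L : H →L[ℂ] H with ‖L‖ ≤ M such that for all f, g ∈ H, ⟪L f, g⟫ = ∫₀^∞ ⟪S((T + s·I)⁻¹ f), (T + s·I)⁻¹ g⟫ ds (in particular, for each f, g this integrand is integrable on (0,∞)). -/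

import Mathlib

open MeasureTheory

open MeasureTheory Set ContinuousLinearMap
open scoped InnerProductSpace

namespace WeakIntOp
variable {H : Type*} [NormedAddCommGroup H] [InnerProductSpace ℂ H] [CompleteSpace H]

noncomputable def aA (T : H →L[ℂ] H) (s : ℝ) : H →L[ℂ] H := T + s • 1
noncomputable def aR (T : H →L[ℂ] H) (s : ℝ) : H →L[ℂ] H := Ring.inverse (aA T s)

omit [CompleteSpace H] in
lemma aA_apply (T : H →L[ℂ] H) (s : ℝ) (x : H) : aA T s x = T x + (s : ℂ) • x := by
  simp [aA, Complex.coe_smul]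

omit [CompleteSpace H] in
lemma inner_aA_re (T : H →L[ℂ] H) (s : ℝ) (x : H) :
    (⟪aA T s x, x⟫_ℂ).re = (⟪T x, x⟫_ℂ).re + s * ‖x‖ ^ 2 := by
  rw [aA_apply, inner_add_left, inner_smul_left]
  have h1 : ⟪x, x⟫_ℂ = ((‖x‖ ^ 2 : ℝ) : ℂ) := by
    exact_mod_cast inner_self_eq_norm_sq_to_K (𝕜 := ℂ) x
  rw [h1, Complex.conj_ofReal, ← Complex.ofReal_mul, Complex.add_re, Complex.ofReal_re]

lemma aux_unit (T : H →L[ℂ] H) (hpos : ∀ f : H, 0 ≤ (⟪T f, f⟫_ℂ).re) {s : ℝ} (hs : 0 < s) :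
    IsUnit (aA T s) := by
  apply ContinuousLinearMap.isUnit_of_forall_le_norm_inner_map _ (c := ⟨s, hs.le⟩)
    (by exact_mod_cast hs)
  intro x
  have h1 : ‖x‖ ^ 2 * s ≤ (⟪aA T s x, x⟫_ℂ).re := by
    rw [inner_aA_re]; nlinarith [hpos x]
  calc ‖x‖ ^ 2 * (⟨s, hs.le⟩ : NNReal) = ‖x‖ ^ 2 * s := rfl
    _ ≤ (⟪aA T s x, x⟫_ℂ).re := h1
    _ ≤ ‖⟪aA T s x, x⟫_ℂ‖ := Complex.re_le_norm _

lemma mul_aR (T : H →L[ℂ] H) (hpos : ∀ f : H, 0 ≤ (⟪T f, f⟫_ℂ).re) {s : ℝ} (hs : 0 < s) :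
    aA T s * aR T s = 1 := Ring.mul_inverse_cancel _ (aux_unit T hpos hs)

lemma aR_mul (T : H →L[ℂ] H) (hpos : ∀ f : H, 0 ≤ (⟪T f, f⟫_ℂ).re) {s : ℝ} (hs : 0 < s) :
    aR T s * aA T s = 1 := Ring.inverse_mul_cancel _ (aux_unit T hpos hs)

lemma aA_aR_apply (T : H →L[ℂ] H) (hpos : ∀ f : H, 0 ≤ (⟪T f, f⟫_ℂ).re) {s : ℝ} (hs : 0 < s)
    (f : H) : aA T s (aR T s f) = f := by
  have := congrArg (fun X : H →L[ℂ] H => X f) (mul_aR T hpos hs)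
  simpa [ContinuousLinearMap.mul_apply] using this

lemma aux_norm_inv (T : H →L[ℂ] H) (hpos : ∀ f : H, 0 ≤ (⟪T f, f⟫_ℂ).re) {s : ℝ} (hs : 0 < s)
    (f : H) : ‖aR T s f‖ ≤ s⁻¹ * ‖f‖ := by
  set u := aR T s f with hu
  have h1 : s * ‖u‖ ^ 2 ≤ (⟪aA T s u, u⟫_ℂ).re := by
    rw [inner_aA_re]; nlinarith [hpos u]
  rw [aA_aR_apply T hpos hs f] at h1
  have h2 : (⟪f, u⟫_ℂ).re ≤ ‖f‖ * ‖u‖ :=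
    (Complex.re_le_norm _).trans (norm_inner_le_norm (𝕜 := ℂ) f u)
  rcases eq_or_lt_of_le (norm_nonneg u) with h0 | h0
  · rw [← h0]; positivity
  · rw [inv_mul_eq_div, le_div_iff₀ hs]
    nlinarith

lemma aA_star (T : H →L[ℂ] H) (hT : IsSelfAdjoint T) (s : ℝ) : star (aA T s) = aA T s := by
  have h1 : (s : ℝ) • (1 : H →L[ℂ] H) = ((s : ℂ)) • 1 := (Complex.coe_smul s 1).symm
  rw [aA, h1, star_add, hT.star_eq, star_smul, star_one]
  simp [Complex.conj_ofReal]

lemma aR_star (T : H →L[ℂ] H) (hT : IsSelfAdjoint T) (s : ℝ) : star (aR T s) = aR T s := by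
  rw [aR, ← Ring.inverse_star, aA_star T hT]

lemma aR_selfAdjoint (T : H →L[ℂ] H) (hT : IsSelfAdjoint T) (s : ℝ) :
    IsSelfAdjoint (aR T s) := aR_star T hT s

omit [CompleteSpace H] in
lemma aA_comm (T : H →L[ℂ] H) (s : ℝ) : T * aA T s = aA T s * T := by
  simp only [aA, mul_add, add_mul, mul_one, one_mul, smul_mul_assoc, mul_smul_comm]

lemma aR_comm (T : H →L[ℂ] H) (hpos : ∀ f : H, 0 ≤ (⟪T f, f⟫_ℂ).re) {s : ℝ} (hs : 0 < s) :
    T * aR T s = aR T s * T := by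
  have h1 : aR T s * aA T s = 1 := Ring.inverse_mul_cancel _ (aux_unit T hpos hs)
  have h2 : aA T s * aR T s = 1 := Ring.mul_inverse_cancel _ (aux_unit T hpos hs)
  have key : aR T s * (aA T s * (T * aR T s)) = aR T s * (T * (aA T s * aR T s)) := by
    rw [← mul_assoc (aA T s), ← aA_comm, mul_assoc]
  calc T * aR T s = aR T s * (aA T s * (T * aR T s)) := by
        rw [← mul_assoc, ← mul_assoc, h1, one_mul]
    _ = aR T s * (T * (aA T s * aR T s)) := key
    _ = aR T s * T := by rw [h2, mul_one]

lemma aux_sqrt (T : H →L[ℂ] H) (hT : IsSelfAdjoint T)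
    (hpos : ∀ f : H, 0 ≤ (⟪T f, f⟫_ℂ).re) (u : H) :
    ‖cfc Real.sqrt T u‖ ^ 2 = (⟪T u, u⟫_ℂ).re := by
  have hTpos : (0 : H →L[ℂ] H) ≤ T := by
    rw [ContinuousLinearMap.nonneg_iff_isPositive]
    refine ⟨(ContinuousLinearMap.isSelfAdjoint_iff_isSymmetric).mp hT, fun x => ?_⟩
    simpa [ContinuousLinearMap.reApplyInnerSelf_apply, RCLike.re_to_complex] using hpos x
  have hspec : ∀ t ∈ spectrum ℝ T, 0 ≤ t := spectrum_nonneg_of_nonneg hTpos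
  have hQsa : IsSelfAdjoint (cfc Real.sqrt T) := cfc_predicate Real.sqrt T
  have hQQ : cfc Real.sqrt T * cfc Real.sqrt T = T := by
    rw [← cfc_mul Real.sqrt Real.sqrt T]
    calc cfc (fun x => Real.sqrt x * Real.sqrt x) T
        = cfc (id : ℝ → ℝ) T := cfc_congr fun t ht => Real.mul_self_sqrt (hspec t ht)
      _ = T := cfc_id ℝ T
  have hsym := (ContinuousLinearMap.isSelfAdjoint_iff_isSymmetric).mp hQsa
  have hsym' : ∀ x y : H, ⟪cfc Real.sqrt T x, y⟫_ℂ = ⟪x, cfc Real.sqrt T y⟫_ℂ :=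
    fun x y => hsym x y
  have h1 : ‖cfc Real.sqrt T u‖ ^ 2 = (⟪cfc Real.sqrt T u, cfc Real.sqrt T u⟫_ℂ).re := by
    have := inner_self_eq_norm_sq (𝕜 := ℂ) (cfc Real.sqrt T u)
    simpa [RCLike.re_to_complex] using this.symm
  rw [h1, hsym']
  have h2 : cfc Real.sqrt T (cfc Real.sqrt T u) = T u := by
    have := congrArg (fun X : H →L[ℂ] H => X u) hQQ
    simpa [ContinuousLinearMap.mul_apply] using this
  rw [h2, ← inner_conj_symm u (T u), Complex.conj_re]

lemma aux_hasDerivAt (T : H →L[ℂ] H) (hpos : ∀ f : H, 0 ≤ (⟪T f, f⟫_ℂ).re) {s : ℝ}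
    (hs : 0 < s) : HasDerivAt (fun t : ℝ => aR T t) (-(aR T s * aR T s)) s := by
  obtain ⟨v, hv⟩ := aux_unit T hpos hs
  have hC : HasDerivAt (fun t : ℝ => aA T t) (1 : H →L[ℂ] H) s := by
    simpa [aA] using ((hasDerivAt_id s).smul_const (1 : H →L[ℂ] H)).const_add T
  have hF : HasFDerivAt Ring.inverse
      (-(ContinuousLinearMap.mulLeftRight ℝ (H →L[ℂ] H) ↑v⁻¹ ↑v⁻¹)) (aA T s) := by
    have := hasFDerivAt_ringInverse (𝕜 := ℝ) v
    rwa [hv] at this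
  have h2 := hF.comp_hasDerivAt s hC
  have h3 : aR T s = ↑v⁻¹ := by
    rw [aR, ← hv, Ring.inverse_unit]
  rw [h3]
  simp only [ContinuousLinearMap.neg_apply, ContinuousLinearMap.mulLeftRight_apply, mul_one] at h2
  exact h2

lemma aR_inner_nonneg (T : H →L[ℂ] H) (hpos : ∀ f : H, 0 ≤ (⟪T f, f⟫_ℂ).re) {s : ℝ}
    (hs : 0 < s) (f : H) : 0 ≤ (⟪f, aR T s f⟫_ℂ).re := by
  set u := aR T s f with hu
  have h1 := inner_aA_re T s u
  rw [aA_aR_apply T hpos hs f] at h1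
  have h2 : (⟪f, u⟫_ℂ).re = (⟪u, f⟫_ℂ).re := by
    rw [← inner_conj_symm u f, Complex.conj_re]
  rw [h2] at h1
  rw [h2, h1]
  nlinarith [hpos u, sq_nonneg ‖u‖]

lemma aux_key (T : H →L[ℂ] H) (hT : IsSelfAdjoint T)
    (hpos : ∀ f : H, 0 ≤ (⟪T f, f⟫_ℂ).re) (f : H) :
    IntegrableOn (fun s : ℝ => ‖cfc Real.sqrt T (aR T s f)‖ ^ 2) (Ioi 0) ∧
    ∫ s in Ioi 0, ‖cfc Real.sqrt T (aR T s f)‖ ^ 2 ≤ ‖f‖ ^ 2 := by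
  set G : ℝ → ℝ := fun s => ‖cfc Real.sqrt T (aR T s f)‖ ^ 2 with hGdef
  set Φ : ℝ → ℝ := fun s => (⟪f, (s : ℝ) • aR T s f⟫_ℂ).re with hΦdef
  have hGpos : ∀ x ∈ Ioi (0:ℝ), 0 ≤ G x := fun x _ => by positivity
  have hΦeq : ∀ s : ℝ, 0 < s → Φ s = s * (⟪f, aR T s f⟫_ℂ).re := by
    intro s hs
    simp only [hΦdef, ← Complex.coe_smul, inner_smul_right]
    rw [Complex.re_ofReal_mul]
  -- derivative of Φ
  have hΦderiv : ∀ x ∈ Ioi (0:ℝ), HasDerivAt Φ (G x) x := by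
    intro x hx
    have hx0 : 0 < x := hx
    have hρ : HasDerivAt (fun s : ℝ => aR T s f) (-(aR T x (aR T x f))) x := by
      have h1 := ((ContinuousLinearMap.apply ℂ H f).restrictScalars
        ℝ).hasFDerivAt.comp_hasDerivAt x (aux_hasDerivAt T hpos hx0)
      simpa [Function.comp_def] using h1
    have hσ : HasDerivAt (fun s : ℝ => s • aR T s f)
        ((x : ℝ) • -(aR T x (aR T x f)) + (1 : ℝ) • aR T x f) x :=
      (hasDerivAt_id x).smul hρ
    have hF : HasDerivAt Φ
        ((⟪f, (x : ℝ) • -(aR T x (aR T x f)) + (1 : ℝ) • aR T x f⟫_ℂ).re) x := by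
      have hlin := (Complex.reCLM.comp
        ((innerSL ℂ f).restrictScalars ℝ)).hasFDerivAt.comp_hasDerivAt x hσ
      exact hlin
    -- identify the derivative value
    have e1 : aA T x * (aR T x * aR T x) = aR T x := by
      rw [← mul_assoc, mul_aR T hpos hx0, one_mul]
    have e2 : T * (aR T x * aR T x) + x • (aR T x * aR T x) = aR T x := by
      rw [aA, add_mul, smul_mul_assoc, one_mul] at e1; exact e1
    have hvec : T (aR T x (aR T x f)) = aR T x f - x • aR T x (aR T x f) := by
      have := congrArg (fun X : H →L[ℂ] H => X f) e2
      simp only [ContinuousLinearMap.add_apply, ContinuousLinearMap.coe_smul',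
        Pi.smul_apply, ContinuousLinearMap.mul_apply] at this
      rw [eq_sub_iff_add_eq]
      exact this
    have hvv : (x : ℝ) • -(aR T x (aR T x f)) + (1 : ℝ) • aR T x f
        = T (aR T x (aR T x f)) := by
      rw [hvec, one_smul, smul_neg]; abel
    have hcomm : T (aR T x (aR T x f)) = aR T x (T (aR T x f)) := by
      have := congrArg (fun X : H →L[ℂ] H => X (aR T x f)) (aR_comm T hpos hx0)
      simpa [ContinuousLinearMap.mul_apply] using this
    have hsymR : ∀ a b : H, ⟪aR T x a, b⟫_ℂ = ⟪a, aR T x b⟫_ℂ := fun a b =>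
      (ContinuousLinearMap.isSelfAdjoint_iff_isSymmetric.mp (aR_selfAdjoint T hT x)) a b
    have hval : (⟪f, (x : ℝ) • -(aR T x (aR T x f)) + (1 : ℝ) • aR T x f⟫_ℂ).re = G x := by
      rw [hvv, hcomm, ← hsymR f (T (aR T x f))]
      have : (⟪aR T x f, T (aR T x f)⟫_ℂ).re = (⟪T (aR T x f), aR T x f⟫_ℂ).re := by
        rw [← inner_conj_symm (aR T x f) (T (aR T x f)), Complex.conj_re]
      rw [this, hGdef, ← aux_sqrt T hT hpos (aR T x f)]
    rwa [hval] at hF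
  -- bounds on Φ
  have hΦ0 : ∀ s ∈ Ioi (0:ℝ), 0 ≤ Φ s := by
    intro s hs
    rw [hΦeq s hs]
    exact mul_nonneg (le_of_lt hs) (aR_inner_nonneg T hpos hs f)
  have hΦle : ∀ s ∈ Ioi (0:ℝ), Φ s ≤ ‖f‖ ^ 2 := by
    intro s hs
    rw [hΦeq s hs]
    have h1 : (⟪f, aR T s f⟫_ℂ).re ≤ ‖f‖ * ‖aR T s f‖ := by
      have := RCLike.re_le_norm (⟪f, aR T s f⟫_ℂ)
      simp only [RCLike.re_to_complex] at this
      exact this.trans (norm_inner_le_norm _ _)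
    have h2 : ‖aR T s f‖ ≤ s⁻¹ * ‖f‖ := aux_norm_inv T hpos hs f
    have hs0 : (0:ℝ) < s := hs
    calc s * (⟪f, aR T s f⟫_ℂ).re ≤ s * (‖f‖ * (s⁻¹ * ‖f‖)) := by
          apply mul_le_mul_of_nonneg_left _ hs0.le
          exact h1.trans (mul_le_mul_of_nonneg_left h2 (norm_nonneg f))
      _ = ‖f‖ ^ 2 := by field_simp
  -- limit at infinity
  have htop : Filter.Tendsto Φ Filter.atTop (nhds (‖f‖ ^ 2)) := by
    have hrepr : ∀ s ∈ Ioi (0:ℝ), Φ s = ‖f‖ ^ 2 - (⟪f, T (aR T s f)⟫_ℂ).re := by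
      intro s hs
      have h2 : T (aR T s f) + (s : ℂ) • aR T s f = f := by
        rw [← aA_apply]; exact aA_aR_apply T hpos hs f
      have h3 : (s : ℝ) • aR T s f = f - T (aR T s f) := by
        rw [← Complex.coe_smul, eq_sub_iff_add_eq, add_comm]
        exact h2
      rw [hΦdef]
      simp only [h3, inner_sub_right, Complex.sub_re]
      congr 1
      have := inner_self_eq_norm_sq (𝕜 := ℂ) f
      simpa [RCLike.re_to_complex] using this
    have hsmall : Filter.Tendsto (fun s : ℝ => (⟪f, T (aR T s f)⟫_ℂ).re)
        Filter.atTop (nhds 0) := by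
      apply squeeze_zero_norm'
        (a := fun s : ℝ => ‖f‖ * ‖T‖ * ‖f‖ * s⁻¹)
      · filter_upwards [Filter.eventually_gt_atTop (0:ℝ)] with s hs
        calc ‖(⟪f, T (aR T s f)⟫_ℂ).re‖ ≤ ‖⟪f, T (aR T s f)⟫_ℂ‖ := by
              have := RCLike.norm_re_le_norm (⟪f, T (aR T s f)⟫_ℂ)
              simpa [RCLike.re_to_complex] using this
          _ ≤ ‖f‖ * ‖T (aR T s f)‖ := norm_inner_le_norm _ _
          _ ≤ ‖f‖ * (‖T‖ * (s⁻¹ * ‖f‖)) := by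
              refine mul_le_mul_of_nonneg_left ?_ (norm_nonneg f)
              exact (T.le_opNorm (aR T s f)).trans
                (mul_le_mul_of_nonneg_left (aux_norm_inv T hpos hs f) (norm_nonneg T))
          _ = ‖f‖ * ‖T‖ * ‖f‖ * s⁻¹ := by ring
      · simpa using tendsto_inv_atTop_zero.const_mul (‖f‖ * ‖T‖ * ‖f‖)
    have h4 := Filter.Tendsto.sub (tendsto_const_nhds (x := ‖f‖ ^ 2)) hsmall
    rw [sub_zero] at h4
    apply h4.congr'
    filter_upwards [Filter.eventually_gt_atTop (0:ℝ)] with s hs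
    exact (hrepr s hs).symm
  -- the modified function
  set c := sInf (Φ '' Ioi 0) with hcdef
  have hne : (Φ '' Ioi 0).Nonempty := ⟨Φ 1, 1, by norm_num, rfl⟩
  have hbdd : BddBelow (Φ '' Ioi 0) := ⟨0, by rintro y ⟨s, hs, rfl⟩; exact hΦ0 s hs⟩
  have hc0 : 0 ≤ c := le_csInf hne (by rintro y ⟨s, hs, rfl⟩; exact hΦ0 s hs)
  set Ψ : ℝ → ℝ := fun s => if s ≤ 0 then c else Φ s with hΨdef
  have hmem : ∀ s ∈ Ioi (0:ℝ), Ψ s = Φ s := fun s hs => if_neg (not_le.mpr hs)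
  have hΨ0 : Ψ 0 = c := if_pos le_rfl
  have hmono : MonotoneOn Φ (Ioi 0) := by
    apply monotoneOn_of_deriv_nonneg (convex_Ioi 0)
    · exact fun x hx => (hΦderiv x hx).continuousAt.continuousWithinAt
    · intro x hx
      rw [interior_Ioi] at hx
      exact (hΦderiv x hx).differentiableAt.differentiableWithinAt
    · intro x hx
      rw [interior_Ioi] at hx
      rw [(hΦderiv x hx).deriv]
      exact hGpos x hx
  have hcont : ContinuousWithinAt Ψ (Ici 0) 0 := by
    rw [ContinuousWithinAt, hΨ0, ← Set.Ioi_insert, nhdsWithin_insert, Filter.tendsto_sup]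
    constructor
    · simpa [hΨ0] using tendsto_pure_nhds Ψ 0
    · have h5 : Filter.Tendsto Φ (nhdsWithin 0 (Ioi 0)) (nhds c) :=
        MonotoneOn.tendsto_nhdsGT hmono hbdd
      apply h5.congr'
      filter_upwards [self_mem_nhdsWithin] with s hs
      exact (hmem s hs).symm
  have hderivΨ : ∀ x ∈ Ioi (0:ℝ), HasDerivAt Ψ (G x) x := by
    intro x hx
    apply (hΦderiv x hx).congr_of_eventuallyEq
    filter_upwards [isOpen_Ioi.mem_nhds hx] with s hs
    exact hmem s hs
  have htopΨ : Filter.Tendsto Ψ Filter.atTop (nhds (‖f‖ ^ 2)) := by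
    apply htop.congr'
    filter_upwards [Filter.eventually_gt_atTop (0:ℝ)] with s hs
    exact (hmem s hs).symm
  refine ⟨integrableOn_Ioi_deriv_of_nonneg hcont hderivΨ hGpos htopΨ, ?_⟩
  rw [integral_Ioi_of_hasDerivAt_of_nonneg hcont hderivΨ hGpos htopΨ, hΨ0]
  linarith

lemma aux_cont (T S : H →L[ℂ] H) (hpos : ∀ f : H, 0 ≤ (⟪T f, f⟫_ℂ).re) (f g : H) :
    ContinuousOn (fun s : ℝ => ⟪S (aR T s f), aR T s g⟫_ℂ) (Ioi 0) := by
  intro x hx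
  apply ContinuousAt.continuousWithinAt
  have hR : ContinuousAt (fun s : ℝ => aR T s) x := (aux_hasDerivAt T hpos hx).continuousAt
  have h1 : ContinuousAt (fun s : ℝ => aR T s f) x :=
    ((ContinuousLinearMap.apply ℂ H f).continuous.continuousAt).comp hR
  have h2 : ContinuousAt (fun s : ℝ => aR T s g) x :=
    ((ContinuousLinearMap.apply ℂ H g).continuous.continuousAt).comp hR
  exact ContinuousAt.inner (S.continuous.continuousAt.comp h1) h2

lemma aux_int (T S : H →L[ℂ] H) (M : ℝ) (hT : IsSelfAdjoint T)
    (hpos : ∀ f : H, 0 ≤ (⟪T f, f⟫_ℂ).re) (hM : 0 ≤ M)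
    (hS : ∀ u v : H, ‖(⟪S u, v⟫_ℂ)‖ ≤ M * ‖cfc Real.sqrt T u‖ * ‖cfc Real.sqrt T v‖)
    (f g : H) :
    IntegrableOn (fun s : ℝ => ⟪S (aR T s f), aR T s g⟫_ℂ) (Ioi 0) ∧
    ‖∫ s in Ioi 0, ⟪S (aR T s f), aR T s g⟫_ℂ‖ ≤ M / 2 * (‖f‖ ^ 2 + ‖g‖ ^ 2) := by
  have hmeas : AEStronglyMeasurable (fun s : ℝ => ⟪S (aR T s f), aR T s g⟫_ℂ)
      (volume.restrict (Ioi 0)) :=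
    (aux_cont T S hpos f g).aestronglyMeasurable measurableSet_Ioi
  have hmaj : IntegrableOn
      (fun s : ℝ => M / 2 * (‖cfc Real.sqrt T (aR T s f)‖ ^ 2
        + ‖cfc Real.sqrt T (aR T s g)‖ ^ 2)) (Ioi 0) :=
    ((aux_key T hT hpos f).1.add (aux_key T hT hpos g).1).const_mul (M / 2)
  have hbd : ∀ s ∈ Ioi (0:ℝ), ‖⟪S (aR T s f), aR T s g⟫_ℂ‖ ≤
      M / 2 * (‖cfc Real.sqrt T (aR T s f)‖ ^ 2 + ‖cfc Real.sqrt T (aR T s g)‖ ^ 2) := by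
    intro s _
    have h1 := hS (aR T s f) (aR T s g)
    nlinarith [sq_nonneg (‖cfc Real.sqrt T (aR T s f)‖ - ‖cfc Real.sqrt T (aR T s g)‖),
      norm_nonneg (cfc Real.sqrt T (aR T s f)), norm_nonneg (cfc Real.sqrt T (aR T s g))]
  have hbd' : ∀ᵐ s ∂(volume.restrict (Ioi (0:ℝ))), ‖⟪S (aR T s f), aR T s g⟫_ℂ‖ ≤
      M / 2 * (‖cfc Real.sqrt T (aR T s f)‖ ^ 2 + ‖cfc Real.sqrt T (aR T s g)‖ ^ 2) :=
    (ae_restrict_iff' measurableSet_Ioi).mpr (Filter.Eventually.of_forall hbd)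
  refine ⟨hmaj.mono' hmeas hbd', ?_⟩
  calc ‖∫ s in Ioi 0, ⟪S (aR T s f), aR T s g⟫_ℂ‖
      ≤ ∫ s in Ioi 0, M / 2 * (‖cfc Real.sqrt T (aR T s f)‖ ^ 2
          + ‖cfc Real.sqrt T (aR T s g)‖ ^ 2) :=
        norm_integral_le_of_norm_le hmaj hbd'
    _ = M / 2 * ((∫ s in Ioi 0, ‖cfc Real.sqrt T (aR T s f)‖ ^ 2)
          + ∫ s in Ioi 0, ‖cfc Real.sqrt T (aR T s g)‖ ^ 2) := by
        rw [MeasureTheory.integral_const_mul, integral_add (aux_key T hT hpos f).1 (aux_key T hT hpos g).1]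
    _ ≤ M / 2 * (‖f‖ ^ 2 + ‖g‖ ^ 2) := by
        have h1 := (aux_key T hT hpos f).2
        have h2 := (aux_key T hT hpos g).2
        nlinarith

lemma aux_int2 (T S : H →L[ℂ] H) (M : ℝ) (hT : IsSelfAdjoint T)
    (hpos : ∀ f : H, 0 ≤ (⟪T f, f⟫_ℂ).re) (hM : 0 ≤ M)
    (hS : ∀ u v : H, ‖(⟪S u, v⟫_ℂ)‖ ≤ M * ‖cfc Real.sqrt T u‖ * ‖cfc Real.sqrt T v‖)
    (f g : H) :
    ‖∫ s in Ioi 0, ⟪S (aR T s f), aR T s g⟫_ℂ‖ ≤ M * ‖f‖ * ‖g‖ := by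
  by_cases hf : f = 0
  · subst hf
    have h1 : (fun s : ℝ => ⟪S (aR T s (0 : H)), aR T s g⟫_ℂ) = fun _ => 0 := by
      funext s; simp
    rw [h1, integral_zero, norm_zero]
    positivity
  by_cases hg : g = 0
  · subst hg
    have h1 : (fun s : ℝ => ⟪S (aR T s f), aR T s (0 : H)⟫_ℂ) = fun _ => 0 := by
      funext s; simp
    rw [h1, integral_zero, norm_zero]
    positivity
  have hf0 : 0 < ‖f‖ := norm_pos_iff.mpr hf
  have hg0 : 0 < ‖g‖ := norm_pos_iff.mpr hg
  set t : ℝ := Real.sqrt (‖g‖ / ‖f‖) with htdef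
  have ht : 0 < t := Real.sqrt_pos.mpr (div_pos hg0 hf0)
  have htc : ((t : ℂ)) ≠ 0 := by exact_mod_cast ht.ne'
  have key : ∀ s : ℝ, ⟪S (aR T s f), aR T s g⟫_ℂ
      = ⟪S (aR T s ((t : ℂ) • f)), aR T s (((t : ℂ))⁻¹ • g)⟫_ℂ := by
    intro s
    rw [_root_.map_smul, _root_.map_smul, _root_.map_smul, inner_smul_left, inner_smul_right, Complex.conj_ofReal]
    rw [← mul_assoc]
    rw [mul_inv_cancel₀ htc, one_mul]
  have h2 := (aux_int T S M hT hpos hM hS ((t : ℂ) • f) (((t : ℂ))⁻¹ • g)).2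
  have ha : ‖(t : ℂ) • f‖ ^ 2 = ‖g‖ * ‖f‖ := by
    rw [norm_smul, Complex.norm_real, Real.norm_of_nonneg ht.le, mul_pow, htdef,
      Real.sq_sqrt (div_nonneg hg0.le hf0.le)]
    field_simp
  have hb : ‖((t : ℂ))⁻¹ • g‖ ^ 2 = ‖f‖ * ‖g‖ := by
    rw [norm_smul, norm_inv, Complex.norm_real, Real.norm_of_nonneg ht.le, mul_pow, inv_pow, htdef,
      Real.sq_sqrt (div_nonneg hg0.le hf0.le)]
    field_simp
  rw [ha, hb] at h2
  calc ‖∫ s in Ioi 0, ⟪S (aR T s f), aR T s g⟫_ℂ‖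
      = ‖∫ s in Ioi 0, ⟪S (aR T s ((t : ℂ) • f)), aR T s (((t : ℂ))⁻¹ • g)⟫_ℂ‖ := by
        simp only [key]
    _ ≤ M / 2 * (‖g‖ * ‖f‖ + ‖f‖ * ‖g‖) := h2
    _ = M * ‖f‖ * ‖g‖ := by ring

end WeakIntOp


open WeakIntOp in
/-- Let `T` be a bounded self-adjoint positive injective operator on a complex Hilbert space
and `S` a bounded operator with `|⟪S u, v⟫| ≤ M ‖T^{1/2} u‖ ‖T^{1/2} v‖` for all `u, v`,
where `T^{1/2} = cfc Real.sqrt T`. Then for every `s > 0` the operator `T + s • 1` is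
invertible, and there is a bounded operator `L` with `‖L‖ ≤ M` such that for all `f, g`
the function `s ↦ ⟪S((T + s•1)⁻¹ f), (T + s•1)⁻¹ g⟫` is integrable on `(0, ∞)` and
`⟪L f, g⟫ = ∫₀^∞ ⟪S((T + s•1)⁻¹ f), (T + s•1)⁻¹ g⟫ ds`. -/
theorem exists_weak_integral_operator {H : Type*} [NormedAddCommGroup H]
    [InnerProductSpace ℂ H] [CompleteSpace H] (T S : H →L[ℂ] H) (M : ℝ)
    (hT : IsSelfAdjoint T) (hpos : ∀ f : H, 0 ≤ (inner ℂ (T f) f : ℂ).re)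
    (hinj : Function.Injective T) (hM : 0 ≤ M)
    (hS : ∀ u v : H, ‖(inner ℂ (S u) v : ℂ)‖ ≤
      M * ‖cfc Real.sqrt T u‖ * ‖cfc Real.sqrt T v‖) :
    (∀ s : ℝ, 0 < s → IsUnit (T + s • (1 : H →L[ℂ] H))) ∧
    ∃ L : H →L[ℂ] H, ‖L‖ ≤ M ∧
      ∀ f g : H,
        IntegrableOn
          (fun s : ℝ => (inner ℂ (S (Ring.inverse (T + s • (1 : H →L[ℂ] H)) f))
            (Ring.inverse (T + s • (1 : H →L[ℂ] H)) g) : ℂ))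
          (Set.Ioi 0) ∧
        (inner ℂ (L f) g : ℂ) =
          ∫ s in Set.Ioi (0 : ℝ),
            (inner ℂ (S (Ring.inverse (T + s • (1 : H →L[ℂ] H)) f))
              (Ring.inverse (T + s • (1 : H →L[ℂ] H)) g) : ℂ) := by
  have hpos' : ∀ f : H, 0 ≤ (⟪T f, f⟫_ℂ).re := hpos
  refine ⟨fun s hs => WeakIntOp.aux_unit T hpos' hs, ?_⟩
  have hInt : ∀ f g : H,
      IntegrableOn (fun s : ℝ => ⟪S (aR T s f), aR T s g⟫_ℂ) (Ioi 0) :=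
    fun f g => (aux_int T S M hT hpos' hM hS f g).1
  have hBB : ∀ f g : H,
      ‖∫ s in Ioi 0, ⟪S (aR T s f), aR T s g⟫_ℂ‖ ≤ M * ‖f‖ * ‖g‖ :=
    fun f g => aux_int2 T S M hT hpos' hM hS f g
  set φ : H → H →L[ℂ] ℂ := fun f => LinearMap.mkContinuous
    { toFun := fun g => ∫ s in Ioi 0, ⟪S (aR T s f), aR T s g⟫_ℂ
      map_add' := fun g₁ g₂ => by
        have h1 : ∀ s : ℝ, ⟪S (aR T s f), aR T s (g₁ + g₂)⟫_ℂ
            = ⟪S (aR T s f), aR T s g₁⟫_ℂ + ⟪S (aR T s f), aR T s g₂⟫_ℂ := by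
          intro s; rw [map_add, inner_add_right]
        simp only [h1]
        exact integral_add (hInt f g₁) (hInt f g₂)
      map_smul' := fun c g => by
        have h1 : ∀ s : ℝ, ⟪S (aR T s f), aR T s (c • g)⟫_ℂ
            = c • ⟪S (aR T s f), aR T s g⟫_ℂ := by
          intro s; rw [_root_.map_smul, inner_smul_right]; rfl
        simp only [h1, integral_smul]
        rfl }
    (M * ‖f‖) (fun g => by
      simpa [mul_assoc] using hBB f g) with hφdef
  set y : H → H := fun f => (InnerProductSpace.toDual ℂ H).symm (φ f) with hydef
  have hyip : ∀ f g : H, ⟪y f, g⟫_ℂ = ∫ s in Ioi 0, ⟪S (aR T s f), aR T s g⟫_ℂ := by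
    intro f g
    rw [hydef]
    exact InnerProductSpace.toDual_symm_apply
  have hynorm : ∀ f : H, ‖y f‖ ≤ M * ‖f‖ := by
    intro f
    rw [hydef, LinearIsometryEquiv.norm_map]
    exact LinearMap.mkContinuous_norm_le _ (by positivity) _
  set L : H →L[ℂ] H := LinearMap.mkContinuous
    { toFun := y
      map_add' := fun f₁ f₂ => by
        apply ext_inner_right ℂ
        intro g
        rw [inner_add_left, hyip, hyip, hyip]
        have h1 : ∀ s : ℝ, ⟪S (aR T s (f₁ + f₂)), aR T s g⟫_ℂ
            = ⟪S (aR T s f₁), aR T s g⟫_ℂ + ⟪S (aR T s f₂), aR T s g⟫_ℂ := by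
          intro s; rw [map_add, map_add, inner_add_left]
        simp only [h1]
        exact integral_add (hInt f₁ g) (hInt f₂ g)
      map_smul' := fun c f => by
        apply ext_inner_right ℂ
        intro g
        rw [RingHom.id_apply, inner_smul_left, hyip, hyip]
        have h1 : ∀ s : ℝ, ⟪S (aR T s (c • f)), aR T s g⟫_ℂ
            = (starRingEnd ℂ) c • ⟪S (aR T s f), aR T s g⟫_ℂ := by
          intro s; rw [_root_.map_smul, _root_.map_smul, inner_smul_left]; rfl
        simp only [h1, integral_smul]
        rfl }
    M hynorm with hLdef
  refine ⟨L, LinearMap.mkContinuous_norm_le _ hM _, fun f g => ⟨hInt f g, ?_⟩⟩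
  exact hyip f g
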